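/- For any n×n real matrices A and K and any positive integer m, the determinant of the mn×mn matrix rQK(A,K) equals det(A + m·K) · det(A)^{m−1}. Consequently, when A and A + m·K have positive determinant, log det rQK(A,K) = log det(A + m·K) + (m−1)·log det(A). -/

import Mathlib

open Matrix Kronecker

/-- The restricted quasi-Kronecker matrix `rQK(A, K) = I_m ⊗ A + (e eᵗ) ⊗ K`. -/
noncomputable def rQK {n : ℕ} (m : ℕ) (A K : Matrix (Fin n) (Fin n) ℝ) :
    Matrix (Fin m × Fin n) (Fin m × Fin n) ℝ :=
  (1 : Matrix (Fin m) (Fin m) ℝ) ⊗ₖ A + (Matrix.of fun _ _ => (1 : ℝ)) ⊗ₖ K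

/-- `det rQK(A,K) = det(A + m·K) · det(A)^{m−1}`; consequently, when both determinants
are positive, `log det rQK(A,K) = log det(A + m·K) + (m−1)·log det A`. -/
theorem rQK_det (n m : ℕ) (hm : 0 < m) (A K : Matrix (Fin n) (Fin n) ℝ) :
    (rQK m A K).det = (A + (m : ℝ) • K).det * A.det ^ (m - 1) ∧
      (0 < (A + (m : ℝ) • K).det → 0 < A.det →
        Real.log (rQK m A K).det =
          Real.log (A + (m : ℝ) • K).det + ((m : ℝ) - 1) * Real.log A.det) := by
  haveI : NeZero m := ⟨hm.ne'⟩
  have hm0 : (m : ℝ) ≠ 0 := Nat.cast_ne_zero.mpr hm.ne'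
  set J : Matrix (Fin m) (Fin m) ℝ := Matrix.of fun _ _ => 1 with hJ
  set P : Matrix (Fin m) (Fin m) ℝ :=
    Matrix.of fun i j => if i = 0 then 1 else
      ((if j = i then (1:ℝ) else 0) - (if j = 0 then 1 else 0)) with hP
  set Q : Matrix (Fin m) (Fin m) ℝ :=
    Matrix.of fun i j => (if j = 0 then (1:ℝ)/m else -(1/m)) +
      (if i = j ∧ i ≠ 0 then 1 else 0) with hQ
  have hQsum : ∀ k, (∑ j, Q j k) = if k = 0 then 1 else 0 := by
    intro k
    simp only [hQ, Matrix.of_apply]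
    rw [Finset.sum_add_distrib, Finset.sum_const, Finset.card_univ, Fintype.card_fin]
    have h2 : (∑ j : Fin m, if j = k ∧ j ≠ 0 then (1:ℝ) else 0)
        = if k ≠ 0 then 1 else 0 := by
      simp only [ite_and]
      rw [Finset.sum_ite_eq' Finset.univ k (fun j => if j ≠ 0 then (1:ℝ) else 0)]
      simp
    rw [h2]
    by_cases hk : k = 0
    · simp only [hk, if_pos, ite_true, ne_eq, not_true_eq_false, ite_false, add_zero,
        nsmul_eq_mul]
      field_simp
    · simp only [hk, ite_false, ne_eq, not_false_eq_true, ite_true, nsmul_eq_mul]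
      field_simp
      norm_num
  have hPQ : P * Q = 1 := by
    ext i k
    rw [Matrix.mul_apply]
    by_cases hi : i = 0
    · subst hi
      have : ∀ j, P 0 j * Q j k = Q j k := by
        intro j; simp [hP]
      simp only [this]
      rw [hQsum k, Matrix.one_apply]
      by_cases hk : k = 0 <;> simp [hk, eq_comm]
    · have : ∀ j, P i j * Q j k =
          (if j = i then (1:ℝ) else 0) * Q j k - (if j = 0 then (1:ℝ) else 0) * Q j k := by
        intro j; simp [hP, hi, sub_mul]
      simp only [this]
      rw [Finset.sum_sub_distrib]
      simp only [ite_mul, one_mul, zero_mul]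
      rw [Finset.sum_ite_eq' Finset.univ i (fun j => Q j k),
        Finset.sum_ite_eq' Finset.univ 0 (fun j => Q j k)]
      simp only [Finset.mem_univ, if_true]
      simp only [hQ, Matrix.of_apply]
      by_cases hik : i = k
      · subst hik
        simp [hi, Matrix.one_apply]
      · simp [hik, hi, Matrix.one_apply, eq_comm]
  have hQP : Q * P = 1 := mul_eq_one_comm.mp hPQ
  have hPsum : ∀ i, (∑ j, P i j) = if i = 0 then (m:ℝ) else 0 := by
    intro i
    by_cases hi : i = 0
    · subst hi; simp [hP]
    · simp only [hP, Matrix.of_apply, hi, if_false]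
      rw [Finset.sum_sub_distrib]
      rw [Finset.sum_ite_eq' Finset.univ i (fun _ => (1:ℝ)),
        Finset.sum_ite_eq' Finset.univ 0 (fun _ => (1:ℝ))]
      simp
  set E : Matrix (Fin m) (Fin m) ℝ :=
    Matrix.of fun i k => if i = 0 ∧ k = 0 then (m:ℝ) else 0 with hE
  have hPJQ : P * J * Q = E := by
    ext i k
    rw [Matrix.mul_apply]
    have hPJ : ∀ l, (P * J) i l = if i = 0 then (m:ℝ) else 0 := by
      intro l
      rw [Matrix.mul_apply]
      simp only [hJ, Matrix.of_apply, mul_one]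
      exact hPsum i
    simp only [hPJ]
    rw [← Finset.mul_sum, hQsum k]
    simp only [hE, Matrix.of_apply, ite_and]
    by_cases hi : i = 0 <;> by_cases hk : k = 0 <;> simp [hi, hk]
  set b : Fin m → Matrix (Fin n) (Fin n) ℝ :=
    fun i => if i = 0 then A + (m:ℝ) • K else A with hb
  have hN : (P ⊗ₖ (1 : Matrix (Fin n) (Fin n) ℝ)) * rQK m A K * (Q ⊗ₖ 1)
      = (Matrix.blockDiagonal b).submatrix (Equiv.prodComm (Fin m) (Fin n))
          (Equiv.prodComm (Fin m) (Fin n)) := by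
    have expand : (P ⊗ₖ (1 : Matrix (Fin n) (Fin n) ℝ)) * rQK m A K * (Q ⊗ₖ 1)
        = (1 : Matrix (Fin m) (Fin m) ℝ) ⊗ₖ A + E ⊗ₖ K := by
      rw [rQK, mul_add, add_mul]
      rw [← Matrix.mul_kronecker_mul, ← Matrix.mul_kronecker_mul,
        ← Matrix.mul_kronecker_mul, ← Matrix.mul_kronecker_mul]
      rw [← hJ]
      simp only [Matrix.one_mul, Matrix.mul_one]
      rw [hPQ, hPJQ]
    rw [expand]
    ext ⟨i, a⟩ ⟨k, c⟩
    simp only [Matrix.add_apply, Matrix.kroneckerMap_apply, Matrix.one_apply,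
      Matrix.submatrix_apply, Equiv.prodComm_apply, Prod.swap_prod_mk,
      Matrix.blockDiagonal_apply, hE, Matrix.of_apply, hb]
    by_cases hik : i = k
    · subst hik
      by_cases hi : i = 0 <;>
        simp [hi, Matrix.add_apply, Matrix.smul_apply, mul_comm]
    · simp [hik, fun h : i = 0 => hik, and_comm]
      intro h1 h2
      exact absurd (h1.trans h2.symm) hik
  have hdetPQ : ((P ⊗ₖ (1 : Matrix (Fin n) (Fin n) ℝ)).det) * ((Q ⊗ₖ (1 : Matrix (Fin n) (Fin n) ℝ)).det) = 1 := by
    rw [← Matrix.det_mul, ← Matrix.mul_kronecker_mul, hPQ, Matrix.mul_one,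
      Matrix.one_kronecker_one, Matrix.det_one]
  have hdet : (rQK m A K).det = (A + (m:ℝ) • K).det * A.det ^ (m - 1) := by
    have h1 : ((P ⊗ₖ (1 : Matrix (Fin n) (Fin n) ℝ)) * rQK m A K * (Q ⊗ₖ 1)).det
        = (rQK m A K).det := by
      rw [Matrix.det_mul, Matrix.det_mul]
      rw [mul_comm] at hdetPQ
      calc (P ⊗ₖ (1 : Matrix (Fin n) (Fin n) ℝ)).det * (rQK m A K).det * (Q ⊗ₖ 1).det
          = (rQK m A K).det * ((Q ⊗ₖ (1: Matrix (Fin n) (Fin n) ℝ)).det * (P ⊗ₖ 1).det) := by ring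
        _ = (rQK m A K).det := by rw [hdetPQ, mul_one]
    rw [← h1, hN, Matrix.det_submatrix_equiv_self, Matrix.det_blockDiagonal]
    have hbd : ∀ i, (b i).det = if i = 0 then (A + (m:ℝ) • K).det else A.det := by
      intro i; rw [hb]; exact apply_ite Matrix.det _ _ _
    simp only [hbd]
    rw [← Finset.mul_prod_erase Finset.univ _ (Finset.mem_univ (0 : Fin m))]
    simp only [if_pos rfl]
    congr 1
    rw [Finset.prod_congr rfl (fun i hi => if_neg (Finset.ne_of_mem_erase hi)),
      Finset.prod_const, Finset.card_erase_of_mem (Finset.mem_univ _),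
      Finset.card_univ, Fintype.card_fin]
  refine ⟨hdet, fun h1 h2 => ?_⟩
  rw [hdet, Real.log_mul h1.ne' (pow_pos h2 _).ne', Real.log_pow,
    Nat.cast_sub hm, Nat.cast_one]
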